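/- Let A : Matrix (Fin n) (Fin n) ℝ and let F be the fill relation of A. If i < j < k (as elements of Fin n) and F i j and F i k hold, then F j k holds. -/

import Mathlib

/-- The undirected graph `G(A)` of a square real matrix `A`: `i` is adjacent to `j` iff
`i ≠ j` and (`A i j ≠ 0` or `A j i ≠ 0`). -/
def graphOf {n : ℕ} (A : Matrix (Fin n) (Fin n) ℝ) : SimpleGraph (Fin n) where
  Adj i j := i ≠ j ∧ (A i j ≠ 0 ∨ A j i ≠ 0)
  symm := by
    constructor
    intro i j h
    exact ⟨h.1.symm, h.2.symm⟩
  loopless := by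
    constructor
    intro i h
    exact h.1 rfl

/-- The fill relation of `A`: `fill A i j` iff `i ≠ j` and there is a walk from `i` to
`j` in `G(A)` all of whose interior vertices `u` satisfy `u < i` and `u < j`. -/
def fill {n : ℕ} (A : Matrix (Fin n) (Fin n) ℝ) (i j : Fin n) : Prop :=
  i ≠ j ∧ ∃ w : (graphOf A).Walk i j, ∀ u ∈ w.support.tail.dropLast, u < i ∧ u < j

/-- Decomposition of the support of a nontrivial walk. -/
lemma walk_support_decomp {V : Type*} {G : SimpleGraph V} {a b : V} (hab : a ≠ b)
    (w : G.Walk a b) : w.support = a :: (w.support.tail.dropLast ++ [b]) := by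
  obtain ⟨c, hac, w', rfl⟩ := w.exists_eq_cons_of_ne hab
  have hne : w'.support ≠ [] := w'.support_ne_nil
  have hlast : w'.support.getLast hne = b := w'.getLast_support
  have := List.dropLast_append_getLast hne
  rw [hlast] at this
  simp only [SimpleGraph.Walk.support_cons, List.tail_cons]
  rw [this]

/-- Every vertex of the walk is an endpoint or an interior vertex. -/
lemma walk_mem_support_cases {V : Type*} {G : SimpleGraph V} {a b : V} (hab : a ≠ b)
    (w : G.Walk a b) {u : V} (hu : u ∈ w.support) :
    u = a ∨ u = b ∨ u ∈ w.support.tail.dropLast := by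
  rw [walk_support_decomp hab w] at hu
  simp only [List.mem_cons, List.mem_append, List.mem_singleton] at hu
  tauto

/-- If an element is in `l.tail.dropLast` and equals the head, it occurs twice in `l`. -/
lemma count_ge_two_of_head {α : Type*} [DecidableEq α] {l : List α} (hl : l ≠ [])
    {u : α} (hu : u ∈ l.tail.dropLast) (h : u = l.head hl) : 2 ≤ l.count u := by
  obtain ⟨h', t, rfl⟩ := List.exists_cons_of_ne_nil hl
  simp only [List.head_cons] at h
  subst h
  have h1 : u ∈ t := List.dropLast_subset _ hu
  simp only [List.count_cons_self]
  have := List.count_pos_iff.2 h1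
  omega

/-- If an element is in `l.tail.dropLast` and equals the last element, it occurs twice. -/
lemma count_ge_two_of_getLast {α : Type*} [DecidableEq α] {l : List α} (hl : l ≠ [])
    {u : α} (hu : u ∈ l.tail.dropLast) (h : u = l.getLast hl) : 2 ≤ l.count u := by
  have ht : l.tail ≠ [] := by
    intro h0
    rw [h0] at hu; simp at hu
  have hdecomp := List.dropLast_append_getLast ht
  have hg : l.tail.getLast ht = l.getLast hl := by
    obtain ⟨h', t, rfl⟩ := List.exists_cons_of_ne_nil hl
    simp only [List.tail_cons] at *
    exact (List.getLast_cons ht).symm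
  have h1 : 1 ≤ l.tail.dropLast.count u := List.count_pos_iff.2 hu
  have h2 : l.tail.count u = l.tail.dropLast.count u + 1 := by
    calc l.tail.count u = (l.tail.dropLast ++ [l.tail.getLast ht]).count u := by rw [hdecomp]
      _ = l.tail.dropLast.count u + ([l.tail.getLast ht]).count u := List.count_append ..
      _ = l.tail.dropLast.count u + 1 := by rw [hg, ← h]; simp
  have h3 : l.tail.count u ≤ l.count u := (List.tail_sublist l).count_le u
  omega

theorem fill_trans_of_lt {n : ℕ} (A : Matrix (Fin n) (Fin n) ℝ) (i j k : Fin n)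
    (hij : i < j) (hjk : j < k) (hFij : fill A i j) (hFik : fill A i k) :
    fill A j k := by
  obtain ⟨hij_ne, w1, hw1⟩ := hFij
  obtain ⟨hik_ne, w2, hw2⟩ := hFik
  refine ⟨hjk.ne, ?_⟩
  refine ⟨w1.reverse.append w2, ?_⟩
  set w := w1.reverse.append w2 with hwdef
  -- vertices of w1 are i, j, or < i; vertices of w2 are i, k, or < i
  have hv1 : ∀ u ∈ w1.support, u = i ∨ u = j ∨ u < i := by
    intro u hu
    rcases walk_mem_support_cases hij_ne w1 hu with h | h | h
    · exact Or.inl h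
    · exact Or.inr (Or.inl h)
    · exact Or.inr (Or.inr (hw1 u h).1)
  have hv2 : ∀ u ∈ w2.support, u = i ∨ u = k ∨ u < i := by
    intro u hu
    rcases walk_mem_support_cases hik_ne w2 hu with h | h | h
    · exact Or.inl h
    · exact Or.inr (Or.inl h)
    · exact Or.inr (Or.inr (hw2 u h).1)
  -- count computations
  have hcount : w.support.count j + w.support.count k ≤ 2 := by
    have hs : w.support = w1.support.reverse ++ w2.support.tail := by
      rw [hwdef, SimpleGraph.Walk.support_append, SimpleGraph.Walk.support_reverse]
    have hc1j : w1.support.count j = 1 := by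
      rw [walk_support_decomp hij_ne w1]
      have : (w1.support.tail.dropLast).count j = 0 :=
        List.count_eq_zero.2 (fun h => absurd (hw1 j h).2 (lt_irrefl j))
      simp [List.count_cons, List.count_append, this, hij_ne, hij_ne.symm, hij.ne']
    have hc1k : w1.support.count k = 0 := by
      refine List.count_eq_zero.2 (fun h => ?_)
      rcases hv1 k h with h | h | h
      · exact absurd h.symm (hij.trans hjk).ne
      · exact absurd h.symm hjk.ne
      · exact absurd (hjk.trans' hij |>.trans h) (lt_irrefl i)
    have hc2j : w2.support.count j = 0 := by
      refine List.count_eq_zero.2 (fun h => ?_)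
      rcases hv2 j h with h | h | h
      · exact absurd h.symm hij.ne
      · exact absurd h hjk.ne
      · exact absurd (hij.trans h) (lt_irrefl i)
    have hc2k : w2.support.count k = 1 := by
      rw [walk_support_decomp hik_ne w2]
      have : (w2.support.tail.dropLast).count k = 0 :=
        List.count_eq_zero.2 (fun h => absurd (hw2 k h).2 (lt_irrefl k))
      simp [List.count_cons, List.count_append, this, hik_ne, hik_ne.symm, (hij.trans hjk).ne']
    have t2j : w2.support.tail.count j ≤ w2.support.count j := (List.tail_sublist _).count_le j
    have t2k : w2.support.tail.count k ≤ w2.support.count k := (List.tail_sublist _).count_le k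
    rw [hs]
    simp only [List.count_append, List.count_reverse]
    omega
  intro u hu
  have huS : u ∈ w.support := List.tail_subset _ (List.dropLast_subset _ hu)
  have hmem : u ∈ w1.support ∨ u ∈ w2.support := by
    rw [hwdef, SimpleGraph.Walk.mem_support_append_iff, SimpleGraph.Walk.support_reverse,
      List.mem_reverse] at huS
    exact huS
  have hunj : u ≠ j := by
    rintro rfl
    have hne : w.support ≠ [] := w.support_ne_nil
    have := count_ge_two_of_head hne hu w.head_support.symm
    have hk1 : 1 ≤ w.support.count k := List.count_pos_iff.2 w.end_mem_support
    omega
  have hunk : u ≠ k := by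
    rintro rfl
    have hne : w.support ≠ [] := w.support_ne_nil
    have := count_ge_two_of_getLast hne hu w.getLast_support.symm
    have hj1 : 1 ≤ w.support.count j := List.count_pos_iff.2 w.start_mem_support
    omega
  rcases hmem with h | h
  · rcases hv1 u h with rfl | h | h
    · exact ⟨hij, hij.trans hjk⟩
    · exact absurd h hunj
    · exact ⟨h.trans hij, h.trans (hij.trans hjk)⟩
  · rcases hv2 u h with rfl | h | h
    · exact ⟨hij, hij.trans hjk⟩
    · exact absurd h hunk
    · exact ⟨h.trans hij, h.trans (hij.trans hjk)⟩
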